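/- Let v = (1,0,−m) in the Mukai lattice of a K3 surface, m ≥ 1. The stabilizer Γ_v of v in the isometry group of the Mukai lattice, viewed inside O(v^⊥), equals the kernel of the natural homomorphism O(v^⊥) → O((v^⊥)^*/v^⊥) to the isometry group of the discriminant group. In particular Γ_v = O(v^⊥) if and only if m = 1. -/

import Mathlib

/-- The Mukai pairing on `ℤ ⊕ M ⊕ ℤ`. -/
def mukaiForm {R : Type} [CommRing R] {M : Type} [AddCommGroup M] [Module R M]
    (B : M →ₗ[R] M →ₗ[R] R) : (R × M × R) →ₗ[R] (R × M × R) →ₗ[R] R :=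
  LinearMap.mk₂ R (fun x y => B x.2.1 y.2.1 - x.1 * y.2.2 - y.1 * x.2.2)
    (fun x x' y => by simp [add_mul]; ring)
    (fun c x y => by simp [smul_eq_mul]; ring)
    (fun x y y' => by simp [mul_add]; ring)
    (fun c x y => by simp [smul_eq_mul]; ring)

/-- The form on `v^⊥ ≅ M × ℤ` (for `v = (1,0,−m)`, via `(c,r) ↦ (r,c,rm)`). -/
def perpForm {M : Type} [AddCommGroup M] [Module ℤ M]
    (B : M →ₗ[ℤ] M →ₗ[ℤ] ℤ) (m : ℤ) : (M × ℤ) →ₗ[ℤ] (M × ℤ) →ₗ[ℤ] ℤ :=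
  LinearMap.mk₂ ℤ (fun x y => B x.1 y.1 - 2 * m * x.2 * y.2)
    (fun x x' y => by simp; ring)
    (fun c x y => by simp [smul_eq_mul]; ring)
    (fun x y y' => by simp; ring)
    (fun c x y => by simp [smul_eq_mul]; ring)

set_option linter.unusedSectionVars false
section Aux
variable {M : Type} [AddCommGroup M] [Module ℤ M]

@[simp] lemma perpForm_apply (B : M →ₗ[ℤ] M →ₗ[ℤ] ℤ) (m : ℤ) (x y : M × ℤ) :
    perpForm B m x y = B x.1 y.1 - 2 * m * x.2 * y.2 := rfl

@[simp] lemma mukaiForm_apply (B : M →ₗ[ℤ] M →ₗ[ℤ] ℤ) (x y : ℤ × M × ℤ) :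
    mukaiForm B x y = B x.2.1 y.2.1 - x.1 * y.2.2 - y.1 * x.2.2 := rfl

def gMap (m : ℤ) (h : (M × ℤ) →ₗ[ℤ] (M × ℤ)) (w : M × ℤ) :
    (ℤ × M × ℤ) →ₗ[ℤ] (ℤ × M × ℤ) :=
  { toFun := fun x =>
      ((h (x.2.1, x.1)).2 + (x.2.2 - m * x.1) * w.2,
        (h (x.2.1, x.1)).1 + (x.2.2 - m * x.1) • w.1,
        m * ((h (x.2.1, x.1)).2 + (x.2.2 - m * x.1) * w.2) + (x.2.2 - m * x.1))
    map_add' := fun x y => by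
      have h2 : h (x.2.1 + y.2.1, x.1 + y.1) = h (x.2.1, x.1) + h (y.2.1, y.1) := by
        rw [show ((x.2.1 + y.2.1, x.1 + y.1) : M × ℤ) = (x.2.1, x.1) + (y.2.1, y.1) from rfl,
          map_add]
      refine Prod.ext ?_ (Prod.ext ?_ ?_)
      · simp only [Prod.fst_add, Prod.snd_add, h2]; ring
      · have h3 : x.2.2 + y.2.2 - m * (x.1 + y.1) = (x.2.2 - m * x.1) + (y.2.2 - m * y.1) := by
          ring
        simp only [Prod.fst_add, Prod.snd_add, h2]
        rw [h3, add_zsmul]; abel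
      · simp only [Prod.fst_add, Prod.snd_add, h2]; ring
    map_smul' := fun c x => by
      have h2 : h (c • x.2.1, c * x.1) = c • h (x.2.1, x.1) := by
        rw [show ((c • x.2.1, c * x.1) : M × ℤ) = c • (x.2.1, x.1) from rfl, map_smul]
      refine Prod.ext ?_ (Prod.ext ?_ ?_)
      · simp only [Prod.smul_fst, Prod.smul_snd, smul_eq_mul, RingHom.id_apply, h2]; ring
      · have h3 : c * x.2.2 - m * (c * x.1) = c * (x.2.2 - m * x.1) := by ring
        simp only [Prod.smul_fst, Prod.smul_snd, smul_eq_mul, RingHom.id_apply, h2]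
        rw [zsmul_add, h3, mul_zsmul]
      · simp only [Prod.smul_fst, Prod.smul_snd, smul_eq_mul, RingHom.id_apply, h2]; ring }

set_option linter.unusedSectionVars false in
@[simp] lemma gMap_apply (m : ℤ) (h : (M × ℤ) →ₗ[ℤ] (M × ℤ)) (w : M × ℤ) (x : ℤ × M × ℤ) :
    gMap m h w x =
      ((h (x.2.1, x.1)).2 + (x.2.2 - m * x.1) * w.2,
        (h (x.2.1, x.1)).1 + (x.2.2 - m * x.1) • w.1,
        m * ((h (x.2.1, x.1)).2 + (x.2.2 - m * x.1) * w.2) + (x.2.2 - m * x.1)) := rfl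



variable (B : M →ₗ[ℤ] M →ₗ[ℤ] ℤ) (m : ℤ)

/-- injectivity of the map to the dual induced by `perpForm` -/
lemma perp_inj (hm : (0:ℤ) < m) (hinj : Function.Injective B) {q : M × ℤ}
    (hq : ∀ x : M × ℤ, B q.1 x.1 - 2 * m * q.2 * x.2 = 0) : q = 0 := by
  have h1 : q.1 = 0 := by
    apply hinj
    apply LinearMap.ext
    intro d
    have := hq (d, 0)
    simpa using this
  have h2 : q.2 = 0 := by
    have := hq (0, 1)
    rw [h1] at this
    simp at this
    rcases this with h | h
    · omega
    · exact h
  exact Prod.ext h1 h2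

lemma Bz1 (t : ℤ) (a b : M) : B (t • a) b = t * B a b := by
  rw [map_zsmul]; rfl

lemma Bz2 (t : ℤ) (a b : M) : B a (t • b) = t * B a b := by
  rw [map_zsmul]; rfl

/-- the second projection as a linear map (with ambient instances) -/
def proj2 : (M × ℤ) →ₗ[ℤ] ℤ :=
  { toFun := fun p => p.2
    map_add' := fun a b => rfl
    map_smul' := fun c a => rfl }

@[simp] lemma proj2_apply (p : M × ℤ) : (proj2 : (M × ℤ) →ₗ[ℤ] ℤ) p = p.2 := rfl

/-- key pointwise identity: `perpForm (h p) w = (h p).2 - p.2`. -/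
lemma pw_identity (h : (M × ℤ) →ₗ[ℤ] (M × ℤ))
    (hiso : ∀ x y, perpForm B m (h x) (h y) = perpForm B m x y)
    (hm : (0:ℤ) < m) {w : M × ℤ}
    (hw : h ((0:M),(1:ℤ)) = ((2*m) • w.1, 1 + 2*m*w.2)) (p : M × ℤ) :
    B (h p).1 w.1 - 2*m*(h p).2*w.2 = (h p).2 - p.2 := by
  have H := hiso p ((0:M),(1:ℤ))
  rw [hw] at H
  simp only [perpForm_apply, Bz2, map_zero] at H
  have hne : (2*m : ℤ) ≠ 0 := by positivity
  apply mul_left_cancel₀ hne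
  linear_combination H

lemma ww_identity (h : (M × ℤ) →ₗ[ℤ] (M × ℤ))
    (hiso : ∀ x y, perpForm B m (h x) (h y) = perpForm B m x y)
    (hm : (0:ℤ) < m) {w : M × ℤ}
    (hw : h ((0:M),(1:ℤ)) = ((2*m) • w.1, 1 + 2*m*w.2)) :
    B w.1 w.1 = 2*w.2 + 2*m*w.2^2 := by
  have H := pw_identity B m h hiso hm hw ((0:M),(1:ℤ))
  rw [hw] at H
  simp only [Bz1] at H
  have hne : (2*m : ℤ) ≠ 0 := by positivity
  apply mul_left_cancel₀ hne
  linear_combination H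

/-- the constructed `gMap` is an isometry for the Mukai form -/
lemma gMap_isometry (hsymm : ∀ x y, B x y = B y x) (h : (M × ℤ) →ₗ[ℤ] (M × ℤ))
    (hiso : ∀ x y, perpForm B m (h x) (h y) = perpForm B m x y)
    (hm : (0:ℤ) < m) {w : M × ℤ}
    (hw : h ((0:M),(1:ℤ)) = ((2*m) • w.1, 1 + 2*m*w.2)) (x y : ℤ × M × ℤ) :
    mukaiForm B (gMap m h w x) (gMap m h w y) = mukaiForm B x y := by
  have H1 := hiso (x.2.1, x.1) (y.2.1, y.1)
  simp only [perpForm_apply] at H1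
  have H2 := pw_identity B m h hiso hm hw (x.2.1, x.1)
  have H3 := pw_identity B m h hiso hm hw (y.2.1, y.1)
  have H4 := ww_identity B m h hiso hm hw
  simp only [Prod.snd] at H2 H3
  simp only [mukaiForm_apply, gMap_apply, map_add, LinearMap.add_apply, Bz1, Bz2]
  rw [hsymm w.1 (h (y.2.1, y.1)).1]
  linear_combination H1 + (y.2.2 - m * y.1) * H2 + (x.2.2 - m * x.1) * H3
    + (x.2.2 - m * x.1) * (y.2.2 - m * y.1) * H4

lemma gMap_fix (h : (M × ℤ) →ₗ[ℤ] (M × ℤ)) {w : M × ℤ}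
    (hw : h ((0:M),(1:ℤ)) = ((2*m) • w.1, 1 + 2*m*w.2)) :
    gMap m h w ((1 : ℤ), (0 : M), -m) = ((1 : ℤ), (0 : M), -m) := by
  have : ((((1 : ℤ), (0 : M), -m) : ℤ × M × ℤ).2.1, (((1 : ℤ), (0 : M), -m) : ℤ × M × ℤ).1)
      = ((0:M),(1:ℤ)) := rfl
  rw [gMap_apply, this, hw]
  refine Prod.ext ?_ (Prod.ext ?_ ?_)
  · show 1 + 2*m*w.2 + (-m - m * 1) * w.2 = 1; ring
  · show (2*m) • w.1 + (-m - m * 1) • w.1 = 0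
    rw [show (-m - m*1 : ℤ) = -(2*m) by ring, ← add_zsmul]
    simp
  · show m * (1 + 2*m*w.2 + (-m - m * 1) * w.2) + (-m - m*1) = -m; ring

lemma gMap_restrict (h : (M × ℤ) →ₗ[ℤ] (M × ℤ)) (w : M × ℤ) (p : M × ℤ) :
    gMap m h w ((p.2, p.1, p.2 * m) : ℤ × M × ℤ)
      = (((h p).2, (h p).1, (h p).2 * m) : ℤ × M × ℤ) := by
  rw [gMap_apply]
  refine Prod.ext ?_ (Prod.ext ?_ ?_)
  · show (h (p.1, p.2)).2 + (p.2 * m - m * p.2) * w.2 = (h p).2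
    rw [show (p.2 * m - m * p.2 : ℤ) = 0 by ring]
    simp
  · show (h (p.1, p.2)).1 + (p.2 * m - m * p.2) • w.1 = (h p).1
    rw [show (p.2 * m - m * p.2 : ℤ) = 0 by ring]
    simp
  · show m * ((h (p.1, p.2)).2 + (p.2 * m - m * p.2) * w.2) + (p.2 * m - m * p.2) = (h p).2 * m
    rw [show (p.2 * m - m * p.2 : ℤ) = 0 by ring]
    simp [mul_comm]

lemma gMap_comp (h h' : (M × ℤ) →ₗ[ℤ] (M × ℤ)) (w w' : M × ℤ)
    (hcomp : ∀ p, h' (h p) = p) (hW : h' w = -w') (x : ℤ × M × ℤ) :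
    gMap m h' w' (gMap m h w x) = x := by
  rw [gMap_apply, gMap_apply]
  have e1 : (((h (x.2.1, x.1)).1 + (x.2.2 - m * x.1) • w.1,
      (h (x.2.1, x.1)).2 + (x.2.2 - m * x.1) * w.2) : M × ℤ)
      = h (x.2.1, x.1) + (x.2.2 - m * x.1) • w := rfl
  have e2 : h' (h (x.2.1, x.1) + (x.2.2 - m * x.1) • w)
      = (x.2.1, x.1) + (x.2.2 - m * x.1) • (-w') := by
    rw [map_add, map_smul, hcomp, hW]
  have e3 : (m * ((h (x.2.1, x.1)).2 + (x.2.2 - m * x.1) * w.2) + (x.2.2 - m * x.1))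
      - m * ((h (x.2.1, x.1)).2 + (x.2.2 - m * x.1) * w.2) = x.2.2 - m * x.1 := by ring
  refine Prod.ext ?_ (Prod.ext ?_ ?_)
  · show (h' _).2 + _ * w'.2 = x.1
    rw [e1, e2, e3]
    show x.1 + (x.2.2 - m * x.1) • (-w'.2) + (x.2.2 - m * x.1) * w'.2 = x.1
    rw [zsmul_eq_mul]
    simp only [Int.cast_id]
    ring
  · show (h' _).1 + _ • w'.1 = x.2.1
    rw [e1, e2, e3]
    show x.2.1 + (x.2.2 - m * x.1) • (-w'.1) + (x.2.2 - m * x.1) • w'.1 = x.2.1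
    rw [zsmul_neg]
    abel
  · show m * ((h' _).2 + _ * w'.2) + _ = x.2.2
    rw [e1, e2, e3]
    show m * (x.1 + (x.2.2 - m * x.1) • (-w'.2) + (x.2.2 - m * x.1) * w'.2)
      + (x.2.2 - m * x.1) = x.2.2
    rw [zsmul_eq_mul]
    simp only [Int.cast_id]
    ring


/-- existence of the extension `g` given the divisibility condition -/
lemma exists_g (hsymm : ∀ x y, B x y = B y x) (hm : (0:ℤ) < m)
    (h : (M × ℤ) →ₗ[ℤ] (M × ℤ)) (hbij : Function.Bijective h)
    (hiso : ∀ x y, perpForm B m (h x) (h y) = perpForm B m x y) {w : M × ℤ}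
    (hw : h ((0:M),(1:ℤ)) = ((2*m) • w.1, 1 + 2*m*w.2)) :
    ∃ g : (ℤ × M × ℤ) →ₗ[ℤ] (ℤ × M × ℤ), Function.Bijective g
      ∧ (∀ x y, mukaiForm B (g x) (g y) = mukaiForm B x y)
      ∧ g ((1 : ℤ), (0 : M), -m) = ((1 : ℤ), (0 : M), -m)
      ∧ (∀ p : M × ℤ,
          g ((p.2, p.1, p.2 * m) : ℤ × M × ℤ)
            = (((h p).2, (h p).1, (h p).2 * m) : ℤ × M × ℤ)) := by
  set e := LinearEquiv.ofBijective h hbij with he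
  have hcoe : ∀ x, e x = h x := fun x => rfl
  have happly : ∀ x, h (e.symm x) = x := fun x => by
    rw [← hcoe]; exact e.apply_symm_apply x
  have hcomp1 : ∀ p, (e.symm : (M × ℤ) →ₗ[ℤ] (M × ℤ)) (h p) = p := fun p => by
    show e.symm (h p) = p
    rw [← hcoe]; exact e.symm_apply_apply p
  have hW1 : (e.symm : (M × ℤ) →ₗ[ℤ] (M × ℤ)) w = -(-(e.symm w)) := by simp
  have hcomp2 : ∀ p, h ((e.symm : (M × ℤ) →ₗ[ℤ] (M × ℤ)) p) = p := fun p => happly p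
  have hW2 : h (-(e.symm w)) = -w := by rw [map_neg, happly]
  refine ⟨gMap m h w, ⟨?_, ?_⟩, gMap_isometry B m hsymm h hiso hm hw, gMap_fix m h hw,
    gMap_restrict m h w⟩
  · exact Function.LeftInverse.injective
      (gMap_comp m h (e.symm : (M × ℤ) →ₗ[ℤ] (M × ℤ)) w (-(e.symm w)) hcomp1 hW1)
  · exact Function.RightInverse.surjective
      (gMap_comp m (e.symm : (M × ℤ) →ₗ[ℤ] (M × ℤ)) h (-(e.symm w)) w hcomp2
        (by rw [hW2]))

/-- from the extension `g` we get the divisibility condition -/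
lemma C_of_g (h : (M × ℤ) →ₗ[ℤ] (M × ℤ)) (g : (ℤ × M × ℤ) →ₗ[ℤ] (ℤ × M × ℤ))
    (hfix : g ((1 : ℤ), (0 : M), -m) = ((1 : ℤ), (0 : M), -m))
    (hres : ∀ p : M × ℤ,
        g ((p.2, p.1, p.2 * m) : ℤ × M × ℤ)
          = (((h p).2, (h p).1, (h p).2 * m) : ℤ × M × ℤ)) :
    ∃ w : M × ℤ, h ((0:M),(1:ℤ)) = ((2*m) • w.1, 1 + 2*m*w.2) := by
  have h1 := hres ((0:M),(1:ℤ))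
  have harg : (((1:ℤ), (0:M), (1:ℤ)*m) : ℤ × M × ℤ) - ((1:ℤ), (0:M), -m)
      = (2*m) • (((0:ℤ), (0:M), (1:ℤ)) : ℤ × M × ℤ) := by
    refine Prod.ext ?_ (Prod.ext ?_ ?_)
    · show (1:ℤ) - 1 = (2*m) • (0:ℤ)
      rw [zsmul_zero]; ring
    · show (0:M) - 0 = (2*m) • (0:M)
      rw [zsmul_zero]; abel
    · show (1:ℤ)*m - (-m) = (2*m) • (1:ℤ)
      rw [zsmul_eq_mul]; push_cast; ring
  have key : (((h ((0:M),(1:ℤ))).2, (h ((0:M),(1:ℤ))).1, (h ((0:M),(1:ℤ))).2 * m) : ℤ × M × ℤ)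
      - ((1:ℤ), (0:M), -m) = (2*m) • g (((0:ℤ), (0:M), (1:ℤ)) : ℤ × M × ℤ) := by
    rw [← h1, ← hfix, ← map_sub, harg, map_zsmul]
  set G := g (((0:ℤ), (0:M), (1:ℤ)) : ℤ × M × ℤ)
  refine ⟨(G.2.1, G.1), ?_⟩
  have k1 : (h ((0:M),(1:ℤ))).2 - 1 = (2*m) * G.1 := by
    have := congrArg Prod.fst key
    simpa [zsmul_eq_mul] using this
  have k2 : (h ((0:M),(1:ℤ))).1 - 0 = (2*m) • G.2.1 := by
    have := congrArg (fun q : ℤ × M × ℤ => q.2.1) key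
    simpa using this
  refine Prod.ext ?_ ?_
  · show (h ((0:M),(1:ℤ))).1 = (2*m) • G.2.1
    rw [← k2]; abel
  · show (h ((0:M),(1:ℤ))).2 = 1 + 2*m*G.1
    linarith [k1]


/-- divisibility condition implies the discriminant kernel condition -/
lemma D_of_C (hm : (0:ℤ) < m) (hsurj : Function.Surjective B)
    (h : (M × ℤ) →ₗ[ℤ] (M × ℤ)) (hbij : Function.Bijective h)
    (hiso : ∀ x y, perpForm B m (h x) (h y) = perpForm B m x y) {w : M × ℤ}
    (hw : h ((0:M),(1:ℤ)) = ((2*m) • w.1, 1 + 2*m*w.2))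
    (f : (M × ℤ) →ₗ[ℤ] ℤ) : ∃ z, perpForm B m z = f ∘ₗ h - f := by
  have hne : (2*m : ℤ) ≠ 0 := by positivity
  set e := LinearEquiv.ofBijective h hbij with he
  have hcoe : ∀ x, e x = h x := fun x => rfl
  have happly : ∀ x, h (e.symm x) = x := fun x => by
    rw [← hcoe]; exact e.apply_symm_apply x
  set sw := e.symm w with hsw
  -- e.symm (0,1) = (0,1) - (2m) • sw
  have hsymmu : e.symm ((0:M),(1:ℤ)) = ((0:M),(1:ℤ)) - (2*m) • sw := by
    apply hbij.1
    rw [happly, map_sub, map_zsmul, happly, hw]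
    refine Prod.ext ?_ ?_
    · show (0:M) = (2*m) • w.1 - (2*m) • w.1
      rw [sub_self]
    · show (1:ℤ) = 1 + 2*m*w.2 - (2*m) • w.2
      rw [zsmul_eq_mul]; push_cast; ring
  -- pointwise: perpForm sw x = (h x).2 - x.2
  have Psw : ∀ x : M × ℤ, B sw.1 x.1 - 2*m*sw.2*x.2 = (h x).2 - x.2 := by
    intro x
    have K := hiso (e.symm ((0:M),(1:ℤ))) x
    rw [happly] at K
    rw [hsymmu] at K
    have e1 : (((0:M),(1:ℤ)) - (2*m) • sw).1 = 0 - (2*m) • sw.1 := rfl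
    have e2 : (((0:M),(1:ℤ)) - (2*m) • sw).2 = 1 - (2*m) * sw.2 := by
      show (1:ℤ) - (2*m) • sw.2 = 1 - (2*m) * sw.2
      rw [zsmul_eq_mul]; push_cast; ring
    simp only [perpForm_apply, e1, e2, map_sub, map_zero, LinearMap.sub_apply,
      LinearMap.zero_apply, Bz1] at K
    apply mul_left_cancel₀ hne
    linear_combination K
  let φ : M →ₗ[ℤ] ℤ :=
    { toFun := fun d => f (d, 0)
      map_add' := fun a b => by rw [← map_add]; rfl
      map_smul' := fun c a => by
        rw [RingHom.id_apply, ← map_zsmul]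
        congr 1
        ext
        · have hb := Int.cast_smul_eq_zsmul (R := ℤ) (M := M) c a
          rw [Int.cast_id] at hb
          exact hb
        · simp }
  obtain ⟨c, hc⟩ := hsurj φ
  have hcpt : ∀ d, B c d = f (d, 0) := fun d => by rw [hc]; rfl
  -- perpForm (e.symm (c,0)) x = f ((h x).1, 0) related identity
  have E1 : ∀ x : M × ℤ, B (e.symm ((c : M),(0:ℤ))).1 x.1 - 2*m*(e.symm ((c : M),(0:ℤ))).2*x.2
      = f ((h x).1, 0) := by
    intro x
    have K := hiso (e.symm ((c : M),(0:ℤ))) x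
    rw [happly] at K
    simp only [perpForm_apply] at K
    rw [← K]
    simp [hcpt]
  -- decomposition of f
  have fdec : ∀ y : M × ℤ, f y = f (y.1, 0) + y.2 * f ((0:M),(1:ℤ)) := by
    intro y
    have hy : (y : M × ℤ) = (y.1, (0:ℤ)) + y.2 • ((0:M),(1:ℤ)) := by
      refine Prod.ext ?_ ?_
      · show y.1 = y.1 + y.2 • (0:M)
        rw [zsmul_zero, add_zero]
      · show y.2 = 0 + y.2 • (1:ℤ)
        rw [zsmul_eq_mul]; push_cast; ring
    conv_lhs => rw [hy]
    rw [map_add, map_zsmul, zsmul_eq_mul]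
    push_cast; ring
  set k := f ((0:M),(1:ℤ)) with hk
  refine ⟨e.symm ((c : M),(0:ℤ)) - ((c : M),(0:ℤ)) + k • sw, ?_⟩
  apply LinearMap.ext
  intro x
  have z1 : (e.symm ((c : M),(0:ℤ)) - ((c : M),(0:ℤ)) + k • sw).1
      = (e.symm ((c : M),(0:ℤ))).1 - c + k • sw.1 := rfl
  have z2 : (e.symm ((c : M),(0:ℤ)) - ((c : M),(0:ℤ)) + k • sw).2
      = (e.symm ((c : M),(0:ℤ))).2 - 0 + k * sw.2 := by
    show (e.symm ((c : M),(0:ℤ))).2 - 0 + k • sw.2 = _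
    rw [zsmul_eq_mul]; push_cast; ring
  simp only [perpForm_apply, z1, z2, map_sub, map_add, LinearMap.sub_apply,
    LinearMap.add_apply, Bz1, LinearMap.sub_apply, LinearMap.comp_apply]
  have E2 := Psw x
  have E3 := fdec (h x)
  have E4 := fdec x
  have E5 := E1 x
  have E6 := hcpt x.1
  linear_combination E5 + k * E2 - E3 + E4 - E6

/-- discriminant kernel condition implies divisibility -/
lemma C_of_D (hm : (0:ℤ) < m) (hinj : Function.Injective B)
    (h : (M × ℤ) →ₗ[ℤ] (M × ℤ)) (hbij : Function.Bijective h)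
    (hiso : ∀ x y, perpForm B m (h x) (h y) = perpForm B m x y)
    {z : M × ℤ} (hz : perpForm B m z = proj2 ∘ₗ h - proj2) :
    ∃ w : M × ℤ, h ((0:M),(1:ℤ)) = ((2*m) • w.1, 1 + 2*m*w.2) := by
  have hne : (2*m : ℤ) ≠ 0 := by positivity
  set e := LinearEquiv.ofBijective h hbij with he
  have hcoe : ∀ x, e x = h x := fun x => rfl
  have happly : ∀ x, h (e.symm x) = x := fun x => by
    rw [← hcoe]; exact e.apply_symm_apply x
  have hzp : ∀ x : M × ℤ, B z.1 x.1 - 2*m*z.2*x.2 = (h x).2 - x.2 := by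
    intro x
    have := LinearMap.congr_fun hz x
    simpa [LinearMap.sub_apply, LinearMap.comp_apply] using this
  have hq : e.symm ((0:M),(1:ℤ)) - ((0:M),(1:ℤ)) + (2*m) • z = 0 := by
    apply perp_inj B m hm hinj
    intro x
    have q1 : (e.symm ((0:M),(1:ℤ)) - ((0:M),(1:ℤ)) + (2*m) • z).1
        = (e.symm ((0:M),(1:ℤ))).1 - 0 + (2*m) • z.1 := rfl
    have q2 : (e.symm ((0:M),(1:ℤ)) - ((0:M),(1:ℤ)) + (2*m) • z).2
        = (e.symm ((0:M),(1:ℤ))).2 - 1 + (2*m) * z.2 := by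
      show (e.symm ((0:M),(1:ℤ))).2 - 1 + (2*m) • z.2 = _
      rw [zsmul_eq_mul]; push_cast; ring
    have E5 : B (e.symm ((0:M),(1:ℤ))).1 x.1 - 2*m*(e.symm ((0:M),(1:ℤ))).2*x.2
        = -(2*m)*(h x).2 := by
      have K := hiso (e.symm ((0:M),(1:ℤ))) x
      rw [happly] at K
      simp only [perpForm_apply] at K
      rw [← K]
      simp only [map_zero, LinearMap.zero_apply]
      ring
    have E6 := hzp x
    rw [q1, q2]
    simp only [map_sub, map_add, map_zero, LinearMap.sub_apply, LinearMap.add_apply,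
      LinearMap.zero_apply, Bz1]
    linear_combination E5 + 2*m*E6
  have hsymmu : e.symm ((0:M),(1:ℤ)) = ((0:M),(1:ℤ)) - (2*m) • z := by
    rw [eq_sub_iff_add_eq]
    have h2 : e.symm ((0:M),(1:ℤ)) + (2*m) • z
        = (e.symm ((0:M),(1:ℤ)) - ((0:M),(1:ℤ)) + (2*m) • z) + ((0:M),(1:ℤ)) := by abel
    rw [h2, hq, zero_add]
  have hu : h ((0:M),(1:ℤ)) = ((0:M),(1:ℤ)) + (2*m) • h z := by
    have h0 := happly ((0:M),(1:ℤ))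
    rw [hsymmu, map_sub, map_zsmul] at h0
    exact eq_add_of_sub_eq h0
  refine ⟨h z, ?_⟩
  rw [hu]
  refine Prod.ext ?_ ?_
  · show (0:M) + (2*m) • (h z).1 = (2*m) • (h z).1
    rw [zero_add]
  · show (1:ℤ) + (2*m) • (h z).2 = 1 + 2*m*(h z).2
    rw [zsmul_eq_mul]; push_cast; ring

/-- structure of `h (0,1)` for any isometry: its `M`-part is divisible by `2m`. -/
lemma hu0_struct (hm : (0:ℤ) < m) (hinj : Function.Injective B)
    (hsurj : Function.Surjective B)
    (h : (M × ℤ) →ₗ[ℤ] (M × ℤ)) (hbij : Function.Bijective h)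
    (hiso : ∀ x y, perpForm B m (h x) (h y) = perpForm B m x y) :
    ∃ c₂ : M, (h ((0:M),(1:ℤ))).1 = (2*m) • c₂
      ∧ ((h ((0:M),(1:ℤ))).2)^2 = 1 + 2*m*(B c₂ c₂) := by
  have hne : (2*m : ℤ) ≠ 0 := by positivity
  set e := LinearEquiv.ofBijective h hbij with he
  have hcoe : ∀ x, e x = h x := fun x => rfl
  have happly : ∀ x, h (e.symm x) = x := fun x => by
    rw [← hcoe]; exact e.apply_symm_apply x
  set ψ : M →ₗ[ℤ] ℤ :=
    { toFun := fun d => -(e.symm ((d : M), (0:ℤ))).2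
      map_add' := fun a b => by
        have h1 : (((a + b : M), (0:ℤ)) : M × ℤ) = (a, 0) + (b, 0) := by
          refine Prod.ext rfl ?_
          show (0:ℤ) = 0 + 0
          ring
        show -(e.symm ((a + b : M), (0:ℤ))).2 = -(e.symm (a,0)).2 + -(e.symm (b,0)).2
        rw [h1, map_add]
        show -((e.symm (a,0)).2 + (e.symm (b,0)).2) = _
        ring
      map_smul' := fun c a => by
        simp only [RingHom.id_apply]
        have hb := Int.cast_smul_eq_zsmul (R := ℤ) (M := M) c a
        rw [Int.cast_id] at hb
        rw [hb]
        have h1 : (((c • a : M), (0:ℤ)) : M × ℤ) = c • ((a : M), (0:ℤ)) := by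
          refine Prod.ext rfl ?_
          show (0:ℤ) = c • (0:ℤ)
          rw [zsmul_zero]
        show -(e.symm ((c • a : M), (0:ℤ))).2 = c • (-(e.symm (a,0)).2)
        rw [h1, map_zsmul]
        show -(c • (e.symm (a,0)).2) = c • (-(e.symm (a,0)).2)
        rw [zsmul_eq_mul, zsmul_eq_mul]
        push_cast
        ring } with hψ
  obtain ⟨c₂, hc₂⟩ := hsurj ψ
  have hψd : ∀ d, ψ d = -(e.symm ((d : M), (0:ℤ))).2 := fun d => rfl
  have hkey : ∀ d, B (h ((0:M),(1:ℤ))).1 d = 2*m*(B c₂ d) := by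
    intro d
    have K := hiso ((0:M),(1:ℤ)) (e.symm ((d : M),(0:ℤ)))
    rw [happly] at K
    simp only [perpForm_apply, map_zero, LinearMap.zero_apply] at K
    have hv : B c₂ d = -(e.symm ((d : M),(0:ℤ))).2 := by rw [hc₂]; exact hψd d
    rw [hv]
    simp at K
    linarith [K]
  have c1eq : (h ((0:M),(1:ℤ))).1 = (2*m) • c₂ := by
    apply hinj
    apply LinearMap.ext
    intro d
    rw [Bz1, hkey]
  refine ⟨c₂, c1eq, ?_⟩
  have K0 := hiso ((0:M),(1:ℤ)) ((0:M),(1:ℤ))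
  simp only [perpForm_apply, map_zero, LinearMap.zero_apply] at K0
  rw [c1eq, Bz1, Bz2] at K0
  apply mul_left_cancel₀ hne
  linear_combination -K0

end Aux

/-- for `v = (1,0,−m)`, an isometry `h` of `v^⊥` extends to an
isometry of the Mukai lattice fixing `v` (i.e. lies in `Γ_v`) if and only if the
induced map on the discriminant group `(v^⊥)^*/v^⊥` is the identity; that is,
`Γ_v` is the kernel of `O(v^⊥) → O((v^⊥)^*/v^⊥)`.  In particular every isometry
of `v^⊥` so extends if and only if `m = 1`. -/
theorem stabilizer_is_kernel_of_discriminant_action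
    (m : ℕ) (hm : 1 ≤ m)
    {M : Type} [AddCommGroup M] [Module ℤ M] [Module.Free ℤ M] [Module.Finite ℤ M]
    (B : M →ₗ[ℤ] M →ₗ[ℤ] ℤ) (hsymm : ∀ x y, B x y = B y x)
    (heven : ∀ c, Even (B c c)) (hunimod : Function.Bijective B) :
    (∀ h : (M × ℤ) →ₗ[ℤ] (M × ℤ), Function.Bijective h →
      (∀ x y, perpForm B (m : ℤ) (h x) (h y) = perpForm B (m : ℤ) x y) →
      ((∃ g : (ℤ × M × ℤ) →ₗ[ℤ] (ℤ × M × ℤ), Function.Bijective g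
          ∧ (∀ x y, mukaiForm B (g x) (g y) = mukaiForm B x y)
          ∧ g ((1 : ℤ), (0 : M), -(m : ℤ)) = ((1 : ℤ), (0 : M), -(m : ℤ))
          ∧ (∀ p : M × ℤ,
              g ((p.2, p.1, p.2 * (m : ℤ)) : ℤ × M × ℤ)
                = (((h p).2, (h p).1, (h p).2 * (m : ℤ)) : ℤ × M × ℤ)))
        ↔ (∀ f : (M × ℤ) →ₗ[ℤ] ℤ,
            (f ∘ₗ h - f) ∈ LinearMap.range (perpForm B (m : ℤ)))))
    ∧ ((∀ h : (M × ℤ) →ₗ[ℤ] (M × ℤ), Function.Bijective h →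
        (∀ x y, perpForm B (m : ℤ) (h x) (h y) = perpForm B (m : ℤ) x y) →
        (∃ g : (ℤ × M × ℤ) →ₗ[ℤ] (ℤ × M × ℤ), Function.Bijective g
          ∧ (∀ x y, mukaiForm B (g x) (g y) = mukaiForm B x y)
          ∧ g ((1 : ℤ), (0 : M), -(m : ℤ)) = ((1 : ℤ), (0 : M), -(m : ℤ))
          ∧ (∀ p : M × ℤ,
              g ((p.2, p.1, p.2 * (m : ℤ)) : ℤ × M × ℤ)
                = (((h p).2, (h p).1, (h p).2 * (m : ℤ)) : ℤ × M × ℤ))))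
      ↔ m = 1) := by
  have hmz : (0:ℤ) < (m:ℤ) := by exact_mod_cast hm
  constructor
  · intro h hbij hiso
    constructor
    · rintro ⟨g, hgbij, hgiso, hgfix, hgres⟩ f
      obtain ⟨w, hw⟩ := C_of_g (m:ℤ) h g hgfix hgres
      obtain ⟨z, hz⟩ := D_of_C B (m:ℤ) hmz hunimod.2 h hbij hiso hw f
      exact ⟨z, hz⟩
    · intro hD
      obtain ⟨z, hz⟩ := hD proj2
      obtain ⟨w, hw⟩ := C_of_D B (m:ℤ) hmz hunimod.1 h hbij hiso hz
      exact exists_g B (m:ℤ) hsymm hmz h hbij hiso hw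
  · constructor
    · intro hall
      have hnegbij : Function.Bijective (⇑(-(LinearMap.id) : (M × ℤ) →ₗ[ℤ] (M × ℤ))) := by
        constructor
        · intro a b hab
          simp only [LinearMap.neg_apply, LinearMap.id_coe, id_eq, neg_inj] at hab
          exact hab
        · intro y
          exact ⟨-y, by simp⟩
      have hnegiso : ∀ x y, perpForm B (m:ℤ) ((-(LinearMap.id) : (M × ℤ) →ₗ[ℤ] (M × ℤ)) x)
          ((-(LinearMap.id) : (M × ℤ) →ₗ[ℤ] (M × ℤ)) y) = perpForm B (m:ℤ) x y := by
        intro x y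
        simp only [LinearMap.neg_apply, LinearMap.id_coe, id_eq, perpForm_apply,
          Prod.fst_neg, Prod.snd_neg, map_neg, LinearMap.neg_apply]
        ring
      obtain ⟨g, hgbij, hgiso, hgfix, hgres⟩ := hall _ hnegbij hnegiso
      obtain ⟨w, hw⟩ := C_of_g (m:ℤ) _ g hgfix hgres
      have h2 := congrArg Prod.snd hw
      simp only [LinearMap.neg_apply, LinearMap.id_coe, id_eq, Prod.snd_neg] at h2
      have h3 : (m:ℤ) * (-w.2) = 1 := by linarith
      have h4 : (m:ℤ) = 1 := Int.eq_one_of_mul_eq_one_right (le_of_lt hmz) h3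
      exact_mod_cast h4
    · intro hm1
      subst hm1
      intro h hbij hiso
      obtain ⟨c₂, hc1, hc2⟩ := hu0_struct B ((1:ℕ):ℤ) hmz hunimod.1 hunimod.2 h hbij hiso
      have hcast : ((1:ℕ):ℤ) = 1 := Nat.cast_one
      rcases Int.even_or_odd ((h ((0:M),(1:ℤ))).2) with ⟨t, ht⟩ | ⟨k, hk⟩
      · exfalso
        have h5 : 4*(t*t) = 1 + 2*(B c₂ c₂) := by
          rw [show (4*(t*t) : ℤ) = (t+t)^2 by ring, ← ht, hc2, hcast]
          ring
        generalize t*t = u at h5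
        generalize B c₂ c₂ = v at h5
        omega
      · have hw : h ((0:M),(1:ℤ)) = ((2*((1:ℕ):ℤ)) • (c₂, k).1, 1 + 2*((1:ℕ):ℤ)*(c₂, k).2) := by
          refine Prod.ext ?_ ?_
          · exact hc1
          · show (h ((0:M),(1:ℤ))).2 = 1 + 2*((1:ℕ):ℤ)*k
            rw [hk, hcast]
            ring
        exact exists_g B ((1:ℕ):ℤ) hsymm hmz h hbij hiso hw
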